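/- Let R > 0 and ψ : [0, R) → ℝ be continuously differentiable satisfying (h1) ψ(0) > 0 and ψ′(0) = −1; (h2) ψ′ is convex and strictly increasing; (h3) ψ(t) = 0 for some t ∈ (0, R), with t⋆ := min{t ∈ [0, R) : ψ(t) = 0}. Then the sequence defined by t₀ = 0 and t_{k+1} = t_k − ψ(t_k)/ψ′(t_k) is well defined, strictly increasing, contained in [0, t⋆), converges to t⋆, and satisfies t⋆ − t_{k+1} ≤ (1/2)(t⋆ − t_k) for all k ≥ 0. If in addition ψ is twice continuously differentiable and (h4) ψ′(t⋆) < 0 holds, then t⋆ − t_{k+1} ≤ (ψ″(t⋆)/(−2ψ′(t⋆)))(t⋆ − t_k)² for all k ≥ 0. -/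

import Mathlib

open Metric Set Filter

private lemma stmt6_integral_affine (x y c K : ℝ) :
    (∫ s in x..y, (c + (s - x) * K)) = c * (y - x) + K * (y - x) ^ 2 / 2 := by
  have hG : ∀ s : ℝ, HasDerivAt (fun s => c * s + K / 2 * (s - x) ^ 2) (c + (s - x) * K) s := by
    intro s
    have h1 : HasDerivAt (fun s : ℝ => c * s) c s := by
      simpa using (hasDerivAt_id s).const_mul c
    have h2 : HasDerivAt (fun s : ℝ => (s - x) ^ 2) (2 * (s - x)) s := by
      simpa using ((hasDerivAt_id s).sub_const x).fun_pow 2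
    have := h1.fun_add (h2.const_mul (K / 2))
    refine this.congr_deriv ?_
    ring
  have hint : IntervalIntegrable (fun s => c + (s - x) * K) MeasureTheory.volume x y :=
    Continuous.intervalIntegrable (by continuity) _ _
  rw [intervalIntegral.integral_eq_sub_of_hasDerivAt (fun s _ => hG s) hint]
  ring

/-- Convergence of the scalar Newton sequence for the majorant function ψ
(Corollary `major.convergence`). -/
theorem stmt6 (R : ℝ) (hR : 0 < R) (ψ ψ' : ℝ → ℝ)
    (hψ1 : ∀ t ∈ Ico (0:ℝ) R, HasDerivAt ψ (ψ' t) t)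
    (hψ'c : ContinuousOn ψ' (Ico (0:ℝ) R))
    (h1 : 0 < ψ 0) (h1' : ψ' 0 = -1)
    (h2a : ConvexOn ℝ (Ico (0:ℝ) R) ψ')
    (h2b : StrictMonoOn ψ' (Ico (0:ℝ) R))
    (tstar : ℝ) (h3 : IsLeast {t ∈ Ico (0:ℝ) R | ψ t = 0} tstar)
    (t : ℕ → ℝ) (ht0 : t 0 = 0)
    (htrec : ∀ k, t (k + 1) = t k - ψ (t k) / ψ' (t k)) :
    StrictMono t ∧ (∀ k, t k ∈ Ico (0:ℝ) tstar) ∧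
    Tendsto t atTop (nhds tstar) ∧
    (∀ k, tstar - t (k + 1) ≤ 1 / 2 * (tstar - t k)) ∧
    (∀ ψ'' : ℝ → ℝ, (∀ u ∈ Ico (0:ℝ) R, HasDerivAt ψ' (ψ'' u) u) →
      ContinuousOn ψ'' (Ico (0:ℝ) R) → ψ' tstar < 0 →
      ∀ k, tstar - t (k + 1) ≤ ψ'' tstar / (-2 * ψ' tstar) * (tstar - t k) ^ 2) := by
  obtain ⟨⟨⟨hts0, htsR⟩, hψts⟩, hlb⟩ := h3
  have hts_pos : 0 < tstar := by
    rcases eq_or_lt_of_le hts0 with h | h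
    · exfalso; rw [← h] at hψts; linarith
    · exact h
  have hsubR : Icc (0:ℝ) tstar ⊆ Ico 0 R := fun z hz => ⟨hz.1, lt_of_le_of_lt hz.2 htsR⟩
  have htsIco : tstar ∈ Ico (0:ℝ) R := ⟨hts0, htsR⟩
  have hψcont : ContinuousOn ψ (Ico (0:ℝ) R) := fun z hz =>
    (hψ1 z hz).continuousAt.continuousWithinAt
  -- ψ > 0 on [0, tstar)
  have hpos : ∀ x ∈ Ico (0:ℝ) tstar, 0 < ψ x := by
    intro x hx
    by_contra hle
    push_neg at hle
    have hsub : Icc (0:ℝ) x ⊆ Ico (0:ℝ) R := fun z hz =>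
      hsubR ⟨hz.1, le_trans hz.2 hx.2.le⟩
    have hivt := intermediate_value_Icc' hx.1 (hψcont.mono hsub)
    obtain ⟨s, hs, hψs⟩ := hivt ⟨hle, h1.le⟩
    have := hlb ⟨hsub hs, hψs⟩
    linarith [hs.2, hx.2]
  -- mean value theorem helper
  have hmvt : ∀ x ∈ Ico (0:ℝ) tstar, ∃ c ∈ Ioo x tstar, ψ' c = -ψ x / (tstar - x) := by
    intro x hx
    have hsub : Icc x tstar ⊆ Ico (0:ℝ) R := fun z hz => hsubR ⟨le_trans hx.1 hz.1, hz.2⟩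
    obtain ⟨c, hc, hceq⟩ := exists_hasDerivAt_eq_slope ψ ψ' hx.2 (hψcont.mono hsub)
      (fun z hz => hψ1 z (hsub ⟨hz.1.le, hz.2.le⟩))
    exact ⟨c, hc, by rw [hceq, hψts, zero_sub, neg_div]⟩
  -- ψ' < 0 on [0, tstar)
  have hd_neg : ∀ x ∈ Ico (0:ℝ) tstar, ψ' x < 0 := by
    intro x hx
    obtain ⟨c, hc, hceq⟩ := hmvt x hx
    have hcR : c ∈ Ico (0:ℝ) R := hsubR ⟨le_trans hx.1 hc.1.le, hc.2.le⟩
    have hxR : x ∈ Ico (0:ℝ) R := hsubR ⟨hx.1, hx.2.le⟩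
    have hcneg : ψ' c < 0 := by
      rw [hceq]
      exact div_neg_of_neg_of_pos (by linarith [hpos x hx]) (by linarith [hx.2])
    exact lt_trans (h2b hxR hcR hc.1) hcneg
  -- ψ' tstar ≤ 0
  have hd_ts_le : ψ' tstar ≤ 0 := by
    have hct : ContinuousWithinAt ψ' (Ico (0:ℝ) tstar) tstar :=
      ((hψ'c tstar htsIco).mono (fun z hz => hsubR ⟨hz.1, hz.2.le⟩))
    have hnb : (nhdsWithin tstar (Ico (0:ℝ) tstar)).NeBot := by
      rw [← mem_closure_iff_nhdsWithin_neBot, closure_Ico hts_pos.ne]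
      exact ⟨hts0, le_refl tstar⟩
    exact le_of_tendsto hct (eventually_mem_nhdsWithin.mono fun z hz => (hd_neg z hz).le)
  -- integral bound: for x ∈ [0, tstar) and a pointwise linear upper bound on ψ'
  have hFTC : ∀ x ∈ Ico (0:ℝ) tstar, ∀ K : ℝ,
      (∀ s ∈ Icc x tstar, ψ' s ≤ ψ' x + (s - x) * K) →
      -ψ x ≤ ψ' x * (tstar - x) + K * (tstar - x) ^ 2 / 2 := by
    intro x hx K hpt
    have hsub : Icc x tstar ⊆ Ico (0:ℝ) R := fun z hz => hsubR ⟨le_trans hx.1 hz.1, hz.2⟩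
    have huIcc : uIcc x tstar = Icc x tstar := uIcc_of_le hx.2.le
    have hintψ' : IntervalIntegrable ψ' MeasureTheory.volume x tstar :=
      (hψ'c.mono hsub).intervalIntegrable_of_Icc hx.2.le
    have hftc : (∫ s in x..tstar, ψ' s) = ψ tstar - ψ x :=
      intervalIntegral.integral_eq_sub_of_hasDerivAt
        (fun z hz => hψ1 z (hsub (huIcc ▸ hz))) hintψ'
    have hintg : IntervalIntegrable (fun s => ψ' x + (s - x) * K) MeasureTheory.volume x tstar :=
      Continuous.intervalIntegrable (by continuity) _ _
    have hmono := intervalIntegral.integral_mono_on hx.2.le hintψ' hintg hpt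
    rw [hftc, hψts, stmt6_integral_affine] at hmono
    linarith
  -- the basic Newton step facts
  have hstep : ∀ x ∈ Ico (0:ℝ) tstar,
      x < x - ψ x / ψ' x ∧ x - ψ x / ψ' x < tstar ∧
      tstar - (x - ψ x / ψ' x) ≤ 1 / 2 * (tstar - x) := by
    intro x hx
    have hxR : x ∈ Ico (0:ℝ) R := hsubR ⟨hx.1, hx.2.le⟩
    have hp := hpos x hx
    have ha := hd_neg x hx
    have hd : 0 < tstar - x := sub_pos.2 hx.2
    refine ⟨?_, ?_, ?_⟩
    · have : ψ x / ψ' x < 0 := div_neg_of_pos_of_neg hp ha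
      linarith
    · obtain ⟨c, hc, hceq⟩ := hmvt x hx
      have hcR : c ∈ Ico (0:ℝ) R := hsubR ⟨le_trans hx.1 hc.1.le, hc.2.le⟩
      have hac : ψ' x < ψ' c := h2b hxR hcR hc.1
      rw [eq_div_iff hd.ne'] at hceq
      have h5 : x - tstar < ψ x / ψ' x := by
        rw [lt_div_iff_of_neg ha]
        nlinarith [mul_pos hd (sub_pos.2 hac)]
      linarith
    · -- half rate using convexity of ψ'
      set K := (ψ' tstar - ψ' x) / (tstar - x) with hKdef
      have hK2 : K * (tstar - x) = ψ' tstar - ψ' x := by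
        rw [hKdef]; field_simp
      have hpt : ∀ s ∈ Icc x tstar, ψ' s ≤ ψ' x + (s - x) * K := by
        intro s hs
        rcases eq_or_lt_of_le hs.1 with rfl | hxs
        · simp
        rcases eq_or_lt_of_le hs.2 with rfl | hst
        · nlinarith [hK2]
        have hsR : s ∈ Ico (0:ℝ) R := hsubR ⟨le_trans hx.1 hs.1, hst.le⟩
        have hsec := h2a.secant_mono hxR hsR htsIco (ne_of_gt hxs) (ne_of_gt hx.2) hs.2
        rw [div_le_div_iff₀ (sub_pos.2 hxs) hd] at hsec
        have h7 : (s - x) * K = (ψ' tstar - ψ' x) * (s - x) / (tstar - x) := by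
          rw [hKdef]; ring
        have h8 : ψ' s - ψ' x ≤ (ψ' tstar - ψ' x) * (s - x) / (tstar - x) := by
          rw [le_div_iff₀ hd]; linarith [hsec]
        linarith [h7, h8]
      have hint := hFTC x hx K hpt
      have hKd2 : K * (tstar - x) ^ 2 = (ψ' tstar - ψ' x) * (tstar - x) := by
        rw [pow_two, ← mul_assoc, hK2]
      have h5 : ψ x / ψ' x ≤ -(1 / 2) * (tstar - x) := by
        rw [div_le_iff_of_neg ha]
        nlinarith [hd_ts_le, hd]
      linarith
  -- membership of the sequence
  have hmem : ∀ k, t k ∈ Ico (0:ℝ) tstar := by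
    intro k
    induction k with
    | zero => rw [ht0]; exact ⟨le_refl 0, hts_pos⟩
    | succ n ih =>
      obtain ⟨hlt, hlt2, _⟩ := hstep (t n) ih
      rw [htrec n]
      exact ⟨le_trans ih.1 (le_of_lt hlt), hlt2⟩
  have hsm : StrictMono t := by
    apply strictMono_nat_of_lt_succ
    intro n
    rw [htrec n]
    exact (hstep (t n) (hmem n)).1
  have hhalf : ∀ k, tstar - t (k + 1) ≤ 1 / 2 * (tstar - t k) := by
    intro k
    rw [htrec k]
    exact (hstep (t k) (hmem k)).2.2
  have htend : Tendsto t atTop (nhds tstar) := by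
    have hgeo : ∀ k, tstar - t k ≤ (1 / 2 : ℝ) ^ k * tstar := by
      intro k
      induction k with
      | zero => rw [ht0]; norm_num
      | succ n ih =>
        calc tstar - t (n + 1) ≤ 1 / 2 * (tstar - t n) := hhalf n
          _ ≤ 1 / 2 * ((1 / 2 : ℝ) ^ n * tstar) := by linarith
          _ = (1 / 2 : ℝ) ^ (n + 1) * tstar := by ring
    have hsq : Tendsto (fun k => tstar - t k) atTop (nhds 0) := by
      apply squeeze_zero (fun k => by linarith [(hmem k).2]) hgeo
      have := (tendsto_pow_atTop_nhds_zero_of_lt_one (by norm_num : (0:ℝ) ≤ 1 / 2)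
        (by norm_num : (1/2:ℝ) < 1)).mul_const tstar
      simpa using this
    have h9 : Tendsto (fun k => tstar - (tstar - t k)) atTop (nhds (tstar - 0)) :=
      tendsto_const_nhds.sub hsq
    simp only [sub_zero] at h9
    exact h9.congr (fun k => by ring)
  refine ⟨hsm, hmem, htend, hhalf, ?_⟩
  -- quadratic rate
  intro ψ'' hd2 hd2c h4 k
  rw [htrec k]
  set x := t k with hxdef
  have hx := hmem k
  have hxR : x ∈ Ico (0:ℝ) R := hsubR ⟨hx.1, hx.2.le⟩
  have ha := hd_neg x hx
  have hd : 0 < tstar - x := sub_pos.2 hx.2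
  have hab : ψ' x < ψ' tstar := h2b hxR htsIco hx.2
  have hbne : ψ' tstar ≠ 0 := ne_of_lt h4
  -- ψ'' tstar ≥ 0
  have hMslope : (ψ' tstar - ψ' x) / (tstar - x) ≤ ψ'' tstar := by
    have := h2a.slope_le_of_hasDerivAt hxR htsIco hx.2 (hd2 tstar htsIco)
    rwa [slope_def_field] at this
  have hM0 : 0 ≤ ψ'' tstar :=
    le_trans (div_nonneg (by linarith) hd.le) hMslope
  -- pointwise bound via MVT for ψ' and monotonicity of ψ''
  have hpt : ∀ s ∈ Icc x tstar, ψ' s ≤ ψ' x + (s - x) * ψ'' tstar := by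
    intro s hs
    rcases eq_or_lt_of_le hs.1 with rfl | hxs
    · simp
    have hsub2 : Icc x s ⊆ Ico (0:ℝ) R := fun z hz =>
      hsubR ⟨le_trans hx.1 hz.1, le_trans hz.2 hs.2⟩
    obtain ⟨ξ, hξ, hξeq⟩ := exists_hasDerivAt_eq_slope ψ' ψ'' hxs
      (hψ'c.mono hsub2) (fun z hz => hd2 z (hsub2 ⟨hz.1.le, hz.2.le⟩))
    have hξR : ξ ∈ Ico (0:ℝ) R := hsub2 ⟨hξ.1.le, hξ.2.le⟩
    have hξle : ψ'' ξ ≤ ψ'' tstar := by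
      rcases eq_or_lt_of_le (le_trans hξ.2.le hs.2) with heq | hlt
      · rw [heq]
      · exact le_trans (h2a.le_slope_of_hasDerivAt hξR htsIco hlt (hd2 ξ hξR))
          (by have := h2a.slope_le_of_hasDerivAt hξR htsIco hlt (hd2 tstar htsIco); exact this)
    have : (ψ' s - ψ' x) / (s - x) ≤ ψ'' tstar := by rw [← hξeq]; exact hξle
    rw [div_le_iff₀ (sub_pos.2 hxs)] at this
    linarith
  have hint := hFTC x hx (ψ'' tstar) hpt
  -- chain of inequalities
  have hnum : 0 ≤ ψ'' tstar * (tstar - x) ^ 2 / 2 := by positivity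
  have step1 : tstar - (x - ψ x / ψ' x) ≤ ψ'' tstar * (tstar - x) ^ 2 / 2 / (-ψ' x) := by
    have hcancel : ψ'' tstar * (tstar - x) ^ 2 / 2 / (-ψ' x) * ψ' x
        = -(ψ'' tstar * (tstar - x) ^ 2 / 2) := by
      field_simp [ha.ne]
    have h5 : ψ x / ψ' x ≤ ψ'' tstar * (tstar - x) ^ 2 / 2 / (-ψ' x) - (tstar - x) := by
      rw [div_le_iff_of_neg ha, sub_mul, hcancel]
      linarith
    linarith
  have step2 : ψ'' tstar * (tstar - x) ^ 2 / 2 / (-ψ' x)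
      ≤ ψ'' tstar * (tstar - x) ^ 2 / 2 / (-ψ' tstar) := by
    gcongr <;> linarith
  have step3 : ψ'' tstar * (tstar - x) ^ 2 / 2 / (-ψ' tstar)
      = ψ'' tstar / (-2 * ψ' tstar) * (tstar - x) ^ 2 := by
    field_simp
  linarith [step1, step2, step3.le]
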